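/- For all integers d1, d2 ≥ 1 and all p ∈ [0,1], one has 0 ≤ α(p) ≤ (d2+1)/(d2(d1+1)) ≤ 1 and 0 ≤ β(p) ≤ (d1+1)/(d1(d2+1)) ≤ 1; moreover α(1) = (d2+1)/(d2(d1+1)), β(1) = (d1+1)/(d1(d2+1)), and in particular α(1)·β(1) = 1/(d1·d2). -/

import Mathlib

/-- κ = (d1+1)(d2+1). -/
noncomputable def frogKappa (d1 d2 : ℕ) : ℝ := ((d1 : ℝ) + 1) * ((d2 : ℝ) + 1)

/-- The discriminant Δ(p) = κ² − 2κ(d1+d2)p² + (d2−d1)²p⁴. -/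
noncomputable def frogDelta (d1 d2 : ℕ) (p : ℝ) : ℝ :=
  (frogKappa d1 d2) ^ 2 - 2 * (frogKappa d1 d2) * ((d1 : ℝ) + (d2 : ℝ)) * p ^ 2
    + ((d2 : ℝ) - (d1 : ℝ)) ^ 2 * p ^ 4

/-- α(p) = (κ + p²(d2−d1) − √Δ(p)) / (2 d2 (d1+1) p) for p ≠ 0, and α(0) = 0. -/
noncomputable def frogAlpha (d1 d2 : ℕ) (p : ℝ) : ℝ :=
  if p = 0 then 0 else
    (frogKappa d1 d2 + p ^ 2 * ((d2 : ℝ) - (d1 : ℝ)) - Real.sqrt (frogDelta d1 d2 p)) /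
      (2 * (d2 : ℝ) * ((d1 : ℝ) + 1) * p)

/-- β(p) = (κ + p²(d1−d2) − √Δ(p)) / (2 d1 (d2+1) p) for p ≠ 0, and β(0) = 0. -/
noncomputable def frogBeta (d1 d2 : ℕ) (p : ℝ) : ℝ :=
  if p = 0 then 0 else
    (frogKappa d1 d2 + p ^ 2 * ((d1 : ℝ) - (d2 : ℝ)) - Real.sqrt (frogDelta d1 d2 p)) /
      (2 * (d1 : ℝ) * ((d2 : ℝ) + 1) * p)

lemma frogBeta_eq (d1 d2 : ℕ) (p : ℝ) : frogBeta d1 d2 p = frogAlpha d2 d1 p := by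
  have hk : frogKappa d2 d1 = frogKappa d1 d2 := by unfold frogKappa; ring
  have hd : frogDelta d2 d1 p = frogDelta d1 d2 p := by unfold frogDelta; rw [hk]; ring
  unfold frogBeta frogAlpha
  rw [hk, hd]

lemma frogAlpha_bnds (a b : ℕ) (ha : 1 ≤ a) (hb : 1 ≤ b) (p : ℝ)
    (hp0 : 0 ≤ p) (hp1 : p ≤ 1) :
    0 ≤ frogAlpha a b p ∧ frogAlpha a b p ≤ ((b : ℝ) + 1) / ((b : ℝ) * ((a : ℝ) + 1)) := by
  have hA : (1 : ℝ) ≤ (a : ℝ) := by exact_mod_cast ha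
  have hB : (1 : ℝ) ≤ (b : ℝ) := by exact_mod_cast hb
  set A := (a : ℝ); set B := (b : ℝ)
  have hp2 : p ^ 2 ≤ 1 := by nlinarith
  have hp2n : (0:ℝ) ≤ p ^ 2 := sq_nonneg p
  rcases eq_or_lt_of_le hp0 with h0 | hpos
  · have h : frogAlpha a b p = 0 := by simp [frogAlpha, ← h0]
    rw [h]
    refine ⟨le_refl 0, div_nonneg (by linarith) (by nlinarith)⟩
  · have hpne : p ≠ 0 := ne_of_gt hpos
    have hden : 0 < 2 * B * (A + 1) * p := by positivity
    set S : ℝ := frogKappa a b + p ^ 2 * (B - A) with hSdef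
    have hΔ : frogDelta a b p = S ^ 2 - 4 * frogKappa a b * B * p ^ 2 := by
      simp only [hSdef]; unfold frogDelta frogKappa; ring
    have hκ : frogKappa a b = (A + 1) * (B + 1) := rfl
    have hS : 0 ≤ S := by
      rw [hSdef, hκ]
      nlinarith [mul_nonneg hp2n (by linarith : (0:ℝ) ≤ B),
        mul_nonneg (by linarith : (0:ℝ) ≤ 1 - p ^ 2) (by linarith : (0:ℝ) ≤ A),
        mul_nonneg (by linarith : (0:ℝ) ≤ A) (by linarith : (0:ℝ) ≤ B)]
    have hΔle : frogDelta a b p ≤ S ^ 2 := by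
      rw [hΔ, hκ]
      have : (0:ℝ) ≤ 4 * ((A + 1) * (B + 1)) * B * p ^ 2 := by positivity
      linarith
    have hfact : frogDelta a b p = ((A * B - 1) * p ^ 2) ^ 2
        + (A + 1) * (B + 1) * (1 - p ^ 2) * ((A + 1) * (B + 1) + p ^ 2 * (A - 1) * (B - 1)) := by
      unfold frogDelta frogKappa; ring
    have hΔnn : 0 ≤ frogDelta a b p := by
      rw [hfact]
      have h1 : (0:ℝ) ≤ (A + 1) * (B + 1) * (1 - p ^ 2) := by
        apply mul_nonneg (by nlinarith) (by linarith)
      have h2 : (0:ℝ) ≤ (A + 1) * (B + 1) + p ^ 2 * (A - 1) * (B - 1) := by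
        nlinarith [mul_nonneg hp2n (mul_nonneg (by linarith : (0:ℝ) ≤ A - 1)
          (by linarith : (0:ℝ) ≤ B - 1))]
      exact add_nonneg (sq_nonneg _) (mul_nonneg h1 h2)
    have hsqrt_le : Real.sqrt (frogDelta a b p) ≤ S := by
      calc Real.sqrt (frogDelta a b p) ≤ Real.sqrt (S ^ 2) := Real.sqrt_le_sqrt hΔle
        _ = S := Real.sqrt_sq hS
    have hAlpha : frogAlpha a b p
        = (S - Real.sqrt (frogDelta a b p)) / (2 * B * (A + 1) * p) := by
      simp [frogAlpha, hpne, hSdef]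
      rfl
    constructor
    · rw [hAlpha]
      exact div_nonneg (by linarith) hden.le
    · rw [hAlpha, div_le_div_iff₀ hden (by positivity)]
      have hlast : (0:ℝ) ≤ (A + 1) * (B + 1) - (B - A) * p := by
        nlinarith [mul_nonneg hp0 (by linarith : (0:ℝ) ≤ A),
          mul_nonneg (by linarith : (0:ℝ) ≤ 1 - p) (by linarith : (0:ℝ) ≤ B),
          mul_nonneg (by linarith : (0:ℝ) ≤ A) (by linarith : (0:ℝ) ≤ B)]
      have hid : frogDelta a b p - (S - 2 * (B + 1) * p) ^ 2
          = 4 * p * (B + 1) * (1 - p) * ((A + 1) * (B + 1) - (B - A) * p) := by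
        rw [hΔ, hSdef, hκ]; ring
      have hkey : (S - 2 * (B + 1) * p) ^ 2 ≤ frogDelta a b p := by
        have : (0:ℝ) ≤ 4 * p * (B + 1) * (1 - p) * ((A + 1) * (B + 1) - (B - A) * p) := by
          apply mul_nonneg _ hlast
          apply mul_nonneg _ (by linarith)
          apply mul_nonneg (by linarith) (by linarith)
        linarith
      have h2 : S - 2 * (B + 1) * p ≤ Real.sqrt (frogDelta a b p) := by
        calc S - 2 * (B + 1) * p ≤ |S - 2 * (B + 1) * p| := le_abs_self _
          _ = Real.sqrt ((S - 2 * (B + 1) * p) ^ 2) := (Real.sqrt_sq_eq_abs _).symm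
          _ ≤ Real.sqrt (frogDelta a b p) := Real.sqrt_le_sqrt hkey
      have h3 : S - Real.sqrt (frogDelta a b p) ≤ 2 * (B + 1) * p := by linarith
      have h4 : (0:ℝ) ≤ B * (A + 1) := mul_nonneg (by linarith) (by linarith)
      have h5 := mul_le_mul_of_nonneg_right h3 h4
      linarith [h5]

lemma frogAlpha_one (a b : ℕ) (ha : 1 ≤ a) (hb : 1 ≤ b) :
    frogAlpha a b 1 = ((b : ℝ) + 1) / ((b : ℝ) * ((a : ℝ) + 1)) := by
  have hA : (1 : ℝ) ≤ (a : ℝ) := by exact_mod_cast ha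
  have hB : (1 : ℝ) ≤ (b : ℝ) := by exact_mod_cast hb
  have hΔ1 : frogDelta a b 1 = ((a : ℝ) * b - 1) ^ 2 := by
    unfold frogDelta frogKappa; ring
  have hs : Real.sqrt (frogDelta a b 1) = (a : ℝ) * b - 1 := by
    rw [hΔ1, Real.sqrt_sq (by nlinarith)]
  simp only [frogAlpha, if_neg one_ne_zero, hs, frogKappa]
  have h1 : (0:ℝ) < (b:ℝ) * ((a:ℝ) + 1) := by positivity
  field_simp
  ring

/-- For all d1, d2 ≥ 1 and p ∈ [0,1]: 0 ≤ α(p) ≤ (d2+1)/(d2(d1+1)) ≤ 1 and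
0 ≤ β(p) ≤ (d1+1)/(d1(d2+1)) ≤ 1; moreover α(1) = (d2+1)/(d2(d1+1)),
β(1) = (d1+1)/(d1(d2+1)), and α(1)β(1) = 1/(d1 d2). -/
theorem frog_alpha_beta_bounds (d1 d2 : ℕ) (hd1 : 1 ≤ d1) (hd2 : 1 ≤ d2)
    (p : ℝ) (hp : p ∈ Set.Icc (0 : ℝ) 1) :
    (0 ≤ frogAlpha d1 d2 p ∧
      frogAlpha d1 d2 p ≤ ((d2 : ℝ) + 1) / ((d2 : ℝ) * ((d1 : ℝ) + 1)) ∧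
      ((d2 : ℝ) + 1) / ((d2 : ℝ) * ((d1 : ℝ) + 1)) ≤ 1) ∧
    (0 ≤ frogBeta d1 d2 p ∧
      frogBeta d1 d2 p ≤ ((d1 : ℝ) + 1) / ((d1 : ℝ) * ((d2 : ℝ) + 1)) ∧
      ((d1 : ℝ) + 1) / ((d1 : ℝ) * ((d2 : ℝ) + 1)) ≤ 1) ∧
    frogAlpha d1 d2 1 = ((d2 : ℝ) + 1) / ((d2 : ℝ) * ((d1 : ℝ) + 1)) ∧
    frogBeta d1 d2 1 = ((d1 : ℝ) + 1) / ((d1 : ℝ) * ((d2 : ℝ) + 1)) ∧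
    frogAlpha d1 d2 1 * frogBeta d1 d2 1 = 1 / ((d1 : ℝ) * (d2 : ℝ)) := by
  obtain ⟨hp0, hp1⟩ := hp
  have hA : (1 : ℝ) ≤ (d1 : ℝ) := by exact_mod_cast hd1
  have hB : (1 : ℝ) ≤ (d2 : ℝ) := by exact_mod_cast hd2
  have ha := frogAlpha_bnds d1 d2 hd1 hd2 p hp0 hp1
  have hb := frogAlpha_bnds d2 d1 hd2 hd1 p hp0 hp1
  have ha1 := frogAlpha_one d1 d2 hd1 hd2
  have hb1 := frogAlpha_one d2 d1 hd2 hd1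
  have hMa : ((d2 : ℝ) + 1) / ((d2 : ℝ) * ((d1 : ℝ) + 1)) ≤ 1 := by
    rw [div_le_one (by nlinarith)]
    nlinarith
  have hMb : ((d1 : ℝ) + 1) / ((d1 : ℝ) * ((d2 : ℝ) + 1)) ≤ 1 := by
    rw [div_le_one (by nlinarith)]
    nlinarith
  refine ⟨⟨ha.1, ha.2, hMa⟩, ⟨by rw [frogBeta_eq]; exact hb.1,
    by rw [frogBeta_eq]; exact hb.2, hMb⟩, ha1, by rw [frogBeta_eq]; exact hb1, ?_⟩
  rw [ha1, frogBeta_eq, hb1]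
  field_simp
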